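/- Let A_{I_n} be the Artin group on two generators with edge label n ≥ 2, and let χ : A_{I_n} → ℤ be the homomorphism sending both generators to 1. Then χ is surjective and its kernel is a free group. -/

import Mathlib

/-- The alternating product `x * y * x * ⋯` of length `n`. -/
def altProd {M : Type*} [Monoid M] (x y : M) : ℕ → M
  | 0 => 1
  | n + 1 => x * altProd y x n

/-- The dihedral Artin group with label `n`:
`⟨x, y ∣ ⟨x,y⟩ⁿ = ⟨y,x⟩ⁿ⟩` where `⟨x,y⟩ⁿ` is the alternating product of length `n`,
with `x = FreeGroup.of true`, `y = FreeGroup.of false`. -/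
abbrev DihedralArtin (n : ℕ) : Type :=
  PresentedGroup
    ({altProd (FreeGroup.of true) (FreeGroup.of false) n *
        (altProd (FreeGroup.of false) (FreeGroup.of true) n)⁻¹} : Set (FreeGroup Bool))



namespace DAproof

lemma altProd_map {M N : Type*} [Monoid M] [Monoid N] (f : M →* N) (x y : M) :
    ∀ k, f (altProd x y k) = altProd (f x) (f y) k
  | 0 => by simp [altProd]
  | (k+1) => by simp [altProd, altProd_map f y x k]

variable {H : Type*} [Group H]

def cnj (x u : H) (j : ℕ) : H := x ^ j * u * (x ^ j)⁻¹

@[simp] lemma cnj_zero (x u : H) : cnj x u 0 = u := by simp [cnj]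

lemma cnj_succ (x u : H) (j : ℕ) : cnj x u (j+1) = x * cnj x u j * x⁻¹ := by
  simp [cnj, pow_succ', mul_assoc]

lemma map_cnj {H' : Type*} [Group H'] (f : H →* H') (x u : H) (j : ℕ) :
    f (cnj x u j) = cnj (f x) (f u) j := by simp [cnj]

def oddP (c : ℕ → H) (k : ℕ) : H := ((List.range k).map fun i => c (2*i+1)).prod
def evenP (c : ℕ → H) (k : ℕ) : H := ((List.range k).map fun i => c (2*i)).prod

lemma listprod_congr {k : ℕ} {f g : ℕ → H} (h : ∀ i < k, f i = g i) :
    ((List.range k).map f).prod = ((List.range k).map g).prod := by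
  congr 1
  exact List.map_congr_left (fun i hi => h i (List.mem_range.mp hi))

lemma map_listprod {H' : Type*} [Group H'] (f : H →* H') (c : ℕ → H) (k : ℕ) :
    f (((List.range k).map c).prod) = ((List.range k).map fun j => f (c j)).prod := by
  rw [map_list_prod, List.map_map]; rfl

lemma oddP_succ (c : ℕ → H) (k : ℕ) : oddP c (k+1) = oddP c k * c (2*k+1) := by
  simp [oddP, List.range_succ]

lemma evenP_succ (c : ℕ → H) (k : ℕ) : evenP c (k+1) = evenP c k * c (2*k) := by
  simp [evenP, List.range_succ]

lemma evenP_succ' (c : ℕ → H) (k : ℕ) :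
    evenP c (k+1) = c 0 * ((List.range k).map fun i => c (2*i+2)).prod := by
  rw [evenP, List.range_succ_eq_map, List.map_cons, List.prod_cons, List.map_map]
  congr 1

lemma conj_oddP (x u : H) (t : ℕ) :
    x * oddP (cnj x u) t * x⁻¹ = ((List.range t).map fun i => cnj x u (2*i+2)).prod := by
  have := map_listprod (MulAut.conj x).toMonoidHom (fun i => cnj x u (2*i+1)) t
  simp only [MulAut.conj_apply, MulEquiv.coe_toMonoidHom] at this
  rw [oddP, this]
  exact listprod_congr fun i _ => by rw [← cnj_succ]

lemma conj_evenP (x u : H) (t : ℕ) :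
    x * evenP (cnj x u) t * x⁻¹ = oddP (cnj x u) t := by
  have := map_listprod (MulAut.conj x).toMonoidHom (fun i => cnj x u (2*i)) t
  simp only [MulAut.conj_apply, MulEquiv.coe_toMonoidHom] at this
  rw [evenP, this, oddP]
  exact listprod_congr fun i _ => by rw [← cnj_succ]

lemma key (x u : H) : ∀ k,
    altProd x (u*x) k = oddP (cnj x u) (k/2) * x^k ∧
    altProd (u*x) x k = evenP (cnj x u) ((k+1)/2) * x^k
  | 0 => by simp [altProd, oddP, evenP]
  | (k+1) => by
    obtain ⟨h1, h2⟩ := key x u k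
    constructor
    · show x * altProd (u*x) x k = _
      rw [h2]
      have h3 : x * evenP (cnj x u) ((k+1)/2) = oddP (cnj x u) ((k+1)/2) * x :=
        mul_inv_eq_iff_eq_mul.mp (conj_evenP x u ((k+1)/2))
      rw [← mul_assoc, h3, pow_succ', mul_assoc]
    · show (u*x) * altProd x (u*x) k = _
      rw [h1]
      have h4 : (k+1+1)/2 = k/2 + 1 := by omega
      have h3 : x * oddP (cnj x u) (k/2) =
          ((List.range (k/2)).map fun i => cnj x u (2*i+2)).prod * x :=
        mul_inv_eq_iff_eq_mul.mp (conj_oddP x u (k/2))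
      rw [h4, evenP_succ', cnj_zero, mul_assoc u x, ← mul_assoc x, h3]
      rw [pow_succ']
      group

lemma rel_iff (n : ℕ) (hn : 2 ≤ n) (c : ℕ → H) :
    (oddP c (n/2) = evenP c ((n+1)/2)) ↔
      c (n-1) = if Even n then (oddP c ((n-1)/2))⁻¹ * evenP c (n/2)
                else (evenP c (n/2))⁻¹ * oddP c ((n-1)/2) := by
  rcases Nat.even_or_odd n with he | ho
  · have hm : n % 2 = 0 := Nat.even_iff.mp he
    have h1 : n/2 = (n-1)/2 + 1 := by omega
    have h2 : (n+1)/2 = n/2 := by omega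
    have h3 : 2*((n-1)/2) + 1 = n-1 := by omega
    rw [if_pos he, h2, h1, oddP_succ, h3, eq_inv_mul_iff_mul_eq]
  · have hm : n % 2 = 1 := Nat.odd_iff.mp ho
    have h1 : (n+1)/2 = n/2 + 1 := by omega
    have h2 : (n-1)/2 = n/2 := by omega
    have h3 : 2*(n/2) = n-1 := by omega
    rw [if_neg (Nat.not_even_iff_odd.mpr ho), h1, evenP_succ, h3, h2, eq_inv_mul_iff_mul_eq,
      eq_comm]



abbrev Fn (n : ℕ) := FreeGroup (Fin (n-1))

def gen (n : ℕ) (j : ℕ) : Fn n := if h : j < n-1 then FreeGroup.of ⟨j, h⟩ else 1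

lemma gen_eq (n : ℕ) {j : ℕ} (h : j < n-1) : gen n j = FreeGroup.of (⟨j, h⟩ : Fin (n-1)) :=
  dif_pos h

def AP (n : ℕ) : Fn n := oddP (gen n) ((n-1)/2)
def BP (n : ℕ) : Fn n := evenP (gen n) (n/2)
def rA (n : ℕ) : Fn n := if Even n then (AP n)⁻¹ * BP n else (BP n)⁻¹ * AP n
def sA (n : ℕ) : Fn n := BP n * (AP n)⁻¹

def phi (n : ℕ) : Fn n →* Fn n :=
  FreeGroup.lift fun i => if (i : ℕ) = n-2 then rA n else gen n ((i : ℕ)+1)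

def psi (n : ℕ) : Fn n →* Fn n :=
  FreeGroup.lift fun i => if (i : ℕ) = 0 then sA n else gen n ((i : ℕ)-1)

lemma phi_gen (n : ℕ) {j : ℕ} (h : j+1 < n-1) : phi n (gen n j) = gen n (j+1) := by
  rw [gen_eq n (by omega), phi, FreeGroup.lift_apply_of, if_neg (by simp; omega)]

lemma phi_gen_last (n : ℕ) (hn : 2 ≤ n) : phi n (gen n (n-2)) = rA n := by
  rw [gen_eq n (by omega), phi, FreeGroup.lift_apply_of, if_pos rfl]

lemma psi_gen (n : ℕ) {j : ℕ} (h1 : 1 ≤ j) (h2 : j < n-1) : psi n (gen n j) = gen n (j-1) := by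
  rw [gen_eq n h2, psi, FreeGroup.lift_apply_of, if_neg (by simp; omega)]

lemma psi_gen0 (n : ℕ) (hn : 2 ≤ n) : psi n (gen n 0) = sA n := by
  rw [gen_eq n (by omega), psi, FreeGroup.lift_apply_of, if_pos rfl]

section parity

variable (n : ℕ) (hn : 2 ≤ n)

lemma psi_AP_even (he : Even n) : psi n (AP n) = evenP (gen n) ((n-1)/2) := by
  have hm : n % 2 = 0 := Nat.even_iff.mp he
  rw [AP, oddP, map_listprod, evenP]
  exact listprod_congr fun i hi => by
    rw [psi_gen n (by omega) (by omega)] <;> congr 1 <;> omega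

lemma psi_AP_odd (ho : ¬ Even n) (hn : 2 ≤ n) : psi n (AP n) = BP n := by
  have hm : n % 2 = 1 := Nat.odd_iff.mp (Nat.not_even_iff_odd.mp ho)
  rw [AP, oddP, map_listprod, BP, evenP]
  have h2 : (n-1)/2 = n/2 := by omega
  rw [h2]
  exact listprod_congr fun i hi => by
    rw [psi_gen n (by omega) (by omega)] <;> congr 1 <;> omega

lemma psi_rA (hn : 2 ≤ n) : psi n (rA n) = gen n (n-2) := by
  rcases Nat.even_or_odd n with he | ho
  · have hm : n % 2 = 0 := Nat.even_iff.mp he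
    have hBPs : BP n = evenP (gen n) ((n-1)/2) * gen n (n-2) := by
      rw [BP, show n/2 = (n-1)/2 + 1 by omega, evenP_succ]
      congr 2; omega
    have hB : psi n (BP n) = sA n * AP n := by
      rw [BP, show n/2 = (n-1)/2 + 1 by omega, evenP_succ', map_mul, map_listprod,
        psi_gen0 n hn, AP, oddP]
      congr 1
      exact listprod_congr fun i hi => by
        rw [psi_gen n (by omega) (by omega)] <;> congr 1 <;> omega
    rw [rA, if_pos he, map_mul, map_inv, psi_AP_even n he, hB, sA, hBPs]
    group
  · have hm : n % 2 = 1 := Nat.odd_iff.mp ho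
    have ho' : ¬ Even n := Nat.not_even_iff_odd.mpr ho
    have hn3 : 3 ≤ n := by omega
    have hAPs : AP n = oddP (gen n) ((n-1)/2 - 1) * gen n (n-2) := by
      rw [AP, show (n-1)/2 = ((n-1)/2 - 1) + 1 by omega, oddP_succ]
      congr 2; omega
    have hB : psi n (BP n) = sA n * oddP (gen n) ((n-1)/2 - 1) := by
      rw [BP, show n/2 = ((n-1)/2 - 1) + 1 by omega, evenP_succ', map_mul, map_listprod,
        psi_gen0 n hn, oddP]
      congr 1
      exact listprod_congr fun i hi => by
        rw [psi_gen n (by omega) (by omega)] <;> congr 1 <;> omega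
    rw [rA, if_neg ho', map_mul, map_inv, psi_AP_odd n ho' hn, hB, sA, hAPs]
    group

lemma phi_BP_even (he : Even n) (hn : 2 ≤ n) : phi n (BP n) = BP n := by
  have hm : n % 2 = 0 := Nat.even_iff.mp he
  have h1 : phi n (evenP (gen n) ((n-1)/2)) = AP n := by
    rw [evenP, map_listprod, AP, oddP]
    exact listprod_congr fun i hi => by
      rw [phi_gen n (by omega)]
  have hBPs : BP n = evenP (gen n) ((n-1)/2) * gen n (n-2) := by
    rw [BP, show n/2 = (n-1)/2 + 1 by omega, evenP_succ]
    congr 2; omega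
  rw [hBPs, map_mul, h1, phi_gen_last n hn, rA, if_pos he, hBPs]
  group

lemma phi_sA (hn : 2 ≤ n) : phi n (sA n) = gen n 0 := by
  rcases Nat.even_or_odd n with he | ho
  · have hm : n % 2 = 0 := Nat.even_iff.mp he
    have hB' : BP n = gen n 0 * ((List.range ((n-1)/2)).map fun i => gen n (2*i+2)).prod := by
      rw [BP, show n/2 = (n-1)/2 + 1 by omega, evenP_succ']
    have hA : phi n (AP n) = (gen n 0)⁻¹ * BP n := by
      rw [AP, oddP, map_listprod, hB', ← mul_assoc, inv_mul_cancel, one_mul]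
      exact listprod_congr fun i hi => phi_gen n (by omega)
    rw [sA, map_mul, map_inv, phi_BP_even n he hn, hA]
    group
  · have hm : n % 2 = 1 := Nat.odd_iff.mp ho
    have ho' : ¬ Even n := Nat.not_even_iff_odd.mpr ho
    have hn3 : 3 ≤ n := by omega
    have hB : phi n (BP n) = AP n := by
      rw [BP, evenP, map_listprod, AP, oddP, show (n-1)/2 = n/2 by omega]
      exact listprod_congr fun i hi => phi_gen n (by omega)
    have hB' : BP n = gen n 0 * ((List.range (n/2 - 1)).map fun i => gen n (2*i+2)).prod := by
      rw [BP, show n/2 = (n/2 - 1) + 1 by omega, evenP_succ']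
      norm_num
    have hA : phi n (AP n) = (gen n 0)⁻¹ * AP n := by
      have hAPs : AP n = oddP (gen n) (n/2 - 1) * gen n (n-2) := by
        rw [AP, show (n-1)/2 = (n/2 - 1) + 1 by omega, oddP_succ]
        congr 2; omega
      have h1 : phi n (oddP (gen n) (n/2 - 1)) = (gen n 0)⁻¹ * BP n := by
        rw [oddP, map_listprod, hB', ← mul_assoc, inv_mul_cancel, one_mul]
        exact listprod_congr fun i hi => phi_gen n (by omega)
      rw [hAPs, map_mul, h1, phi_gen_last n hn, rA, if_neg ho']
      group
      rw [hAPs, mul_assoc]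
    rw [sA, map_mul, map_inv, hB, hA]
    group

lemma psi_phi (hn : 2 ≤ n) : (psi n).comp (phi n) = MonoidHom.id (Fn n) := by
  apply FreeGroup.ext_hom
  intro i
  by_cases h : (i : ℕ) = n-2
  · have : FreeGroup.of i = gen n (n-2) := by
      rw [gen_eq n (by omega)]; congr 1; exact Fin.ext (by simp [h])
    simp only [MonoidHom.comp_apply, MonoidHom.id_apply, this]
    rw [phi_gen_last n hn, psi_rA n hn]
  · have hi : (i : ℕ) < n-1 := i.2
    have : FreeGroup.of i = gen n i := by
      rw [gen_eq n hi]
    simp only [MonoidHom.comp_apply, MonoidHom.id_apply, this]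
    rw [phi_gen n (by omega), psi_gen n (by omega) (by omega)]
    norm_num

lemma phi_psi (hn : 2 ≤ n) : (phi n).comp (psi n) = MonoidHom.id (Fn n) := by
  apply FreeGroup.ext_hom
  intro i
  by_cases h : (i : ℕ) = 0
  · have : FreeGroup.of i = gen n 0 := by
      rw [gen_eq n (by omega)]; congr 1; exact Fin.ext (by simp [h])
    simp only [MonoidHom.comp_apply, MonoidHom.id_apply, this]
    rw [psi_gen0 n hn, phi_sA n hn]
  · have hi : (i : ℕ) < n-1 := i.2
    have : FreeGroup.of i = gen n i := by
      rw [gen_eq n hi]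
    simp only [MonoidHom.comp_apply, MonoidHom.id_apply, this]
    rw [psi_gen n (by omega) (by omega), phi_gen n (by omega)]
    congr 1
    omega

def phiAut (hn : 2 ≤ n) : MulAut (Fn n) :=
  MonoidHom.toMulEquiv (phi n) (psi n) (psi_phi n hn) (phi_psi n hn)

lemma phiAut_apply (hn : 2 ≤ n) (w : Fn n) : phiAut n hn w = phi n w := rfl

lemma phiAut_pow_gen0 (hn : 2 ≤ n) : ∀ j, j < n-1 → (phiAut n hn ^ j) (gen n 0) = gen n j := by
  intro j
  induction j with
  | zero => intro _; simp
  | succ j ih =>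
    intro hj
    rw [pow_succ', MulAut.mul_apply, ih (by omega), phiAut_apply, phi_gen n (by omega)]

lemma phiAut_pow_last (hn : 2 ≤ n) : (phiAut n hn ^ (n-1)) (gen n 0) = rA n := by
  have e := congrArg (fun k => (phiAut n hn ^ k) (gen n 0)) (show n-1 = (n-2)+1 by omega)
  rw [e, pow_succ', MulAut.mul_apply,
    phiAut_pow_gen0 n hn (n-2) (by omega), phiAut_apply, phi_gen_last n hn]


open SemidirectProduct Multiplicative

def dz (hn : 2 ≤ n) : Multiplicative ℤ →* MulAut (Fn n) := zpowersHom (MulAut (Fn n)) (phiAut n hn)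

abbrev Gn (hn : 2 ≤ n) := Fn n ⋊[dz n hn] Multiplicative ℤ

def XG (hn : 2 ≤ n) : Gn n hn := inr (ofAdd 1)

lemma X_conj_inl (hn : 2 ≤ n) (w : Fn n) :
    XG n hn * inl w * (XG n hn)⁻¹ = inl (phiAut n hn w) := by
  have h := (inl_aut (φ := dz n hn) (ofAdd 1) w).symm
  rw [map_inv] at h
  have h2 : dz n hn (ofAdd 1) = phiAut n hn := by
    simp [dz]
  rw [h2] at h
  exact h

lemma cnj_X_inl (hn : 2 ≤ n) (w : Fn n) :
    ∀ j, cnj (XG n hn) (inl w) j = inl ((phiAut n hn ^ j) w)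
  | 0 => by simp
  | (j+1) => by
    rw [cnj_succ, cnj_X_inl hn w j, X_conj_inl, pow_succ', MulAut.mul_apply]

lemma rel_G (hn : 2 ≤ n) :
    altProd (XG n hn) (inl (gen n 0) * XG n hn) n
      = altProd (inl (gen n 0) * XG n hn) (XG n hn) n := by
  rw [(key (XG n hn) (inl (gen n 0)) n).1, (key (XG n hn) (inl (gen n 0)) n).2]
  congr 1
  apply (rel_iff n hn _).mpr
  have hm2 : 2*(n/2) ≤ n := by omega
  have hc : ∀ j, j < n-1 → cnj (XG n hn) (inl (gen n 0)) j = inl (gen n j) := fun j hj => by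
    rw [cnj_X_inl, phiAut_pow_gen0 n hn j hj]
  have hlast : cnj (XG n hn) (inl (gen n 0)) (n-1) = inl (rA n) := by
    rw [cnj_X_inl, phiAut_pow_last n hn]
  have hodd : oddP (cnj (XG n hn) (inl (gen n 0))) ((n-1)/2) = inl (AP n) := by
    rw [AP, oddP, oddP, map_listprod]
    exact listprod_congr fun i hi => hc _ (by omega)
  have heven : evenP (cnj (XG n hn) (inl (gen n 0))) (n/2) = inl (BP n) := by
    rw [BP, evenP, evenP, map_listprod]
    exact listprod_congr fun i hi => hc _ (by omega)
  rw [hlast, hodd, heven, rA]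
  split_ifs <;> simp [← map_inv, ← map_mul]

def relsn (n : ℕ) : Set (FreeGroup Bool) :=
  {altProd (FreeGroup.of true) (FreeGroup.of false) n *
        (altProd (FreeGroup.of false) (FreeGroup.of true) n)⁻¹}

def fB (hn : 2 ≤ n) : Bool → Gn n hn := fun b =>
  cond b (XG n hn) (inl (gen n 0) * XG n hn)

lemma hrelG (hn : 2 ≤ n) : ∀ r ∈ relsn n, FreeGroup.lift (fB n hn) r = 1 := by
  intro r hr
  rw [relsn, Set.mem_singleton_iff] at hr
  subst hr
  rw [map_mul, map_inv, altProd_map, altProd_map]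
  simp only [FreeGroup.lift_apply_of, fB, cond_true, cond_false]
  exact mul_inv_eq_one.mpr (rel_G n hn)

def PhiA (hn : 2 ≤ n) : DihedralArtin n →* Gn n hn :=
  PresentedGroup.toGroup (hrelG n hn)

def xA : DihedralArtin n := PresentedGroup.of true
def yA : DihedralArtin n := PresentedGroup.of false
def uA : DihedralArtin n := yA n * (xA n)⁻¹
def aA (j : ℕ) : DihedralArtin n := cnj (xA n) (uA n) j

lemma yA_eq : yA n = uA n * xA n := by rw [uA, inv_mul_cancel_right]

lemma rel_A : altProd (xA n) (yA n) n = altProd (yA n) (xA n) n := by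
  have h : PresentedGroup.mk (relsn n)
      (altProd (FreeGroup.of true) (FreeGroup.of false) n *
        (altProd (FreeGroup.of false) (FreeGroup.of true) n)⁻¹) = 1 := by
    apply (QuotientGroup.eq_one_iff _).mpr
    exact Subgroup.subset_normalClosure rfl
  rw [map_mul, map_inv, altProd_map, altProd_map, mul_inv_eq_one] at h
  exact h

lemma relP_A (hn : 2 ≤ n) :
    oddP (aA n) (n/2) = evenP (aA n) ((n+1)/2) := by
  have h := rel_A n
  rw [yA_eq n] at h
  rw [(key (xA n) (uA n) n).1, (key (xA n) (uA n) n).2] at h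
  exact mul_right_cancel h

lemma aA_last (hn : 2 ≤ n) :
    aA n (n-1) = if Even n then (oddP (aA n) ((n-1)/2))⁻¹ * evenP (aA n) (n/2)
                else (evenP (aA n) (n/2))⁻¹ * oddP (aA n) ((n-1)/2) :=
  (rel_iff n hn _).mp (relP_A n hn)

def fH : Fn n →* DihedralArtin n := FreeGroup.lift fun i => aA n (i : ℕ)

lemma fH_gen {j : ℕ} (h : j < n-1) : fH n (gen n j) = aA n j := by
  rw [gen_eq n h, fH, FreeGroup.lift_apply_of]

lemma fH_rA (hn : 2 ≤ n) : fH n (rA n) = aA n (n-1) := by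
  have hm2 : 2*(n/2) ≤ n := by omega
  have hA : fH n (AP n) = oddP (aA n) ((n-1)/2) := by
    rw [AP, oddP, oddP, map_listprod]
    exact listprod_congr fun i hi => fH_gen n (by omega)
  have hB : fH n (BP n) = evenP (aA n) (n/2) := by
    rw [BP, evenP, evenP, map_listprod]
    exact listprod_congr fun i hi => fH_gen n (by omega)
  rw [rA, aA_last n hn]
  split_ifs <;> rw [map_mul, map_inv, hA, hB]

def fK : Multiplicative ℤ →* DihedralArtin n := zpowersHom (DihedralArtin n) (xA n)

lemma compat_one (hn : 2 ≤ n) (w : Fn n) :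
    fH n (phi n w) = xA n * fH n w * (xA n)⁻¹ := by
  have h : (fH n).comp (phi n) = (MulAut.conj (xA n)).toMonoidHom.comp (fH n) := by
    apply FreeGroup.ext_hom
    intro i
    simp only [MonoidHom.comp_apply, MulEquiv.coe_toMonoidHom, MulAut.conj_apply]
    by_cases h : (i : ℕ) = n-2
    · have : FreeGroup.of i = gen n (n-2) := by
        rw [gen_eq n (by omega)]; congr 1; exact Fin.ext (by simp [h])
      rw [this, phi_gen_last n hn, fH_rA n hn, fH_gen n (by omega),
        show n-1 = (n-2)+1 by omega, aA, aA, cnj_succ]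
    · have hi : (i : ℕ) < n-1 := i.2
      have : FreeGroup.of i = gen n (i : ℕ) := by rw [gen_eq n hi]
      rw [this, phi_gen n (by omega), fH_gen n (by omega), fH_gen n hi, aA, aA, cnj_succ]
  have := DFunLike.congr_fun h w
  simpa using this

lemma compat_inv (hn : 2 ≤ n) (w : Fn n) :
    fH n (psi n w) = (xA n)⁻¹ * fH n w * xA n := by
  have h1 := compat_one n hn (psi n w)
  have h2 : phi n (psi n w) = w := DFunLike.congr_fun (phi_psi n hn) w
  rw [h2] at h1
  rw [h1]
  group

lemma compat_zpow (hn : 2 ≤ n) : ∀ (z : ℤ) (w : Fn n),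
    fH n ((phiAut n hn ^ z) w) = (xA n)^z * fH n w * ((xA n)^z)⁻¹ := by
  intro z
  induction z using Int.induction_on with
  | zero => intro w; simp
  | succ k ih =>
    intro w
    have e : (phiAut n hn ^ ((k : ℤ)+1)) w = (phiAut n hn ^ (k : ℤ)) (phi n w) := by
      rw [zpow_add_one, MulAut.mul_apply]
      rfl
    rw [e, ih, compat_one n hn w]
    rw [zpow_add_one]
    group
  | pred k ih =>
    intro w
    have e : (phiAut n hn ^ (-(k : ℤ)-1)) w = (phiAut n hn ^ (-(k : ℤ))) (psi n w) := by
      rw [zpow_sub_one, MulAut.mul_apply]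
      congr 1
    rw [e, ih, compat_inv n hn w]
    rw [zpow_sub_one]
    group

lemma hcompat (hn : 2 ≤ n) : ∀ g : Multiplicative ℤ,
    (fH n).comp ((dz n hn g).toMonoidHom)
      = (MulAut.conj (fK n g)).toMonoidHom.comp (fH n) := by
  intro g
  apply DFunLike.ext
  intro w
  simp only [MonoidHom.comp_apply, MulEquiv.coe_toMonoidHom, MulAut.conj_apply]
  have : dz n hn g = phiAut n hn ^ (toAdd g) := rfl
  rw [this]
  have : fK n g = (xA n) ^ (toAdd g) := rfl
  rw [this]
  exact compat_zpow n hn (toAdd g) w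

def PsiA (hn : 2 ≤ n) : Gn n hn →* DihedralArtin n :=
  SemidirectProduct.lift (fH n) (fK n) (hcompat n hn)

lemma PhiA_xA (hn : 2 ≤ n) : PhiA n hn (xA n) = XG n hn :=
  PresentedGroup.toGroup.of (hrelG n hn)

lemma PhiA_yA (hn : 2 ≤ n) : PhiA n hn (yA n) = inl (gen n 0) * XG n hn :=
  PresentedGroup.toGroup.of (hrelG n hn)

lemma hPsiPhi (hn : 2 ≤ n) : (PsiA n hn).comp (PhiA n hn) = MonoidHom.id _ := by
  apply PresentedGroup.ext
  intro b
  cases b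
  · show PsiA n hn (PhiA n hn (yA n)) = yA n
    rw [PhiA_yA, map_mul]
    have h1 : PsiA n hn (inl (gen n 0)) = aA n 0 := by
      show (SemidirectProduct.lift _ _ _) (inl (gen n 0)) = _
      rw [SemidirectProduct.lift_inl, fH_gen n (by omega)]
    have h2 : PsiA n hn (XG n hn) = xA n := by
      show (SemidirectProduct.lift _ _ _) (inr (ofAdd 1)) = _
      rw [SemidirectProduct.lift_inr]
      show (xA n) ^ (toAdd (ofAdd (1:ℤ))) = xA n
      simp
    rw [h1, h2, aA, cnj_zero, uA, inv_mul_cancel_right]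
  · show PsiA n hn (PhiA n hn (xA n)) = xA n
    rw [PhiA_xA]
    show (SemidirectProduct.lift _ _ _) (inr (ofAdd 1)) = _
    rw [SemidirectProduct.lift_inr]
    show (xA n) ^ (toAdd (ofAdd (1:ℤ))) = xA n
    simp

lemma hPhiPsi (hn : 2 ≤ n) : (PhiA n hn).comp (PsiA n hn) = MonoidHom.id _ := by
  apply SemidirectProduct.hom_ext
  · apply FreeGroup.ext_hom
    intro i
    have hi : (i : ℕ) < n-1 := i.2
    simp only [MonoidHom.comp_apply, MonoidHom.id_apply]
    have h0 : PsiA n hn (inl (FreeGroup.of i)) = aA n (i : ℕ) := by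
      show (SemidirectProduct.lift _ _ _) (inl (FreeGroup.of i)) = _
      rw [SemidirectProduct.lift_inl, fH, FreeGroup.lift_apply_of]
    rw [h0, aA, map_cnj, PhiA_xA]
    have hu : PhiA n hn (uA n) = inl (gen n 0) := by
      rw [uA, map_mul, map_inv, PhiA_xA, PhiA_yA, mul_inv_cancel_right]
    rw [hu, cnj_X_inl n hn _ _, phiAut_pow_gen0 n hn _ hi, gen_eq n hi]
  · apply MonoidHom.ext_mint
    simp only [MonoidHom.comp_apply, MonoidHom.id_apply]
    have h2 : PsiA n hn (inr (ofAdd 1)) = xA n := by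
      show (SemidirectProduct.lift _ _ _) (inr (ofAdd 1)) = _
      rw [SemidirectProduct.lift_inr]
      show (xA n) ^ (toAdd (ofAdd (1:ℤ))) = xA n
      simp
    rw [h2, PhiA_xA]
    rfl

def eAG (hn : 2 ≤ n) : DihedralArtin n ≃* Gn n hn :=
  MonoidHom.toMulEquiv (PhiA n hn) (PsiA n hn) (hPsiPhi n hn) (hPhiPsi n hn)

end parity
end DAproof

/-- For the dihedral Artin group with label `n ≥ 2`, the homomorphism
`χ : A_(I_n) → ℤ` sending both generators to `1 ∈ ℤ` is surjective and its
kernel is a free group. -/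
theorem dihedralArtin_to_int_surjective_and_ker_free (n : ℕ) (hn : 2 ≤ n)
    (χ : DihedralArtin n →* Multiplicative ℤ)
    (hx : χ (PresentedGroup.of true) = Multiplicative.ofAdd 1)
    (hy : χ (PresentedGroup.of false) = Multiplicative.ofAdd 1) :
    Function.Surjective χ ∧ IsFreeGroup χ.ker := by
  open DAproof Multiplicative SemidirectProduct in
  constructor
  · intro z
    refine ⟨(PresentedGroup.of true) ^ (Multiplicative.toAdd z), ?_⟩
    rw [map_zpow, hx]
    rw [← ofAdd_zsmul, smul_eq_mul, mul_one, ofAdd_toAdd]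
  · have hχ : χ = SemidirectProduct.rightHom.comp (DAproof.eAG n hn : DihedralArtin n →* Gn n hn) := by
      apply PresentedGroup.ext
      intro b
      cases b
      · show χ (yA n) = SemidirectProduct.rightHom ((DAproof.eAG n hn : DihedralArtin n →* Gn n hn) (yA n))
        have : (DAproof.eAG n hn : DihedralArtin n →* Gn n hn) (yA n) = PhiA n hn (yA n) := rfl
        rw [this, PhiA_yA, map_mul]
        have hyy : χ (yA n) = Multiplicative.ofAdd 1 := hy
        rw [hyy]
        simp [XG]
      · show χ (xA n) = SemidirectProduct.rightHom ((DAproof.eAG n hn : DihedralArtin n →* Gn n hn) (xA n))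
        have : (DAproof.eAG n hn : DihedralArtin n →* Gn n hn) (xA n) = PhiA n hn (xA n) := rfl
        rw [this, PhiA_xA]
        have hxx : χ (xA n) = Multiplicative.ofAdd 1 := hx
        rw [hxx]
        simp [XG]
    have hker : χ.ker = Subgroup.comap (DAproof.eAG n hn : DihedralArtin n →* Gn n hn)
        (SemidirectProduct.rightHom.ker) := by
      rw [hχ]
      exact (MonoidHom.comap_ker _ _).symm
    have hmap : χ.ker.map (DAproof.eAG n hn : DihedralArtin n →* Gn n hn)
        = (SemidirectProduct.inl : Fn n →* Gn n hn).range := by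
      rw [hker, Subgroup.map_comap_eq_self_of_surjective (f := (DAproof.eAG n hn : DihedralArtin n →* Gn n hn)) (DAproof.eAG n hn).surjective,
        SemidirectProduct.range_inl_eq_ker_rightHom]
    have iso : χ.ker ≃* Fn n :=
      (((DAproof.eAG n hn).subgroupMap χ.ker).trans (MulEquiv.subgroupCongr hmap)).trans
        (MonoidHom.ofInjective SemidirectProduct.inl_injective).symm
    exact IsFreeGroup.ofMulEquiv iso.symm
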